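/- arXiv:2404.05006 — 3 statements merged into one kernel-verified Lean document; each statement's English description precedes it below -/
import Mathlib

section
/- Let ξ be a random vector in R^r with mean zero and a Stein kernel τ, let a ∈ R^d and V a d×r real matrix. Then the random vector Vξ + a has a Stein kernel given by x ↦ E[V τ(ξ) V^T | Vξ + a = x]. -/
open MeasureTheory ProbabilityTheory

noncomputable section

/-- Partial derivative in direction `j`. -/
def pd {d : ℕ} (j : Fin d) (h : (Fin d → ℝ) → ℝ) : (Fin d → ℝ) → ℝ :=
  fun x => fderiv ℝ h x (Pi.single j 1)

/-- Iterated partial derivatives along a list of coordinates. -/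
def pdList {d : ℕ} : List (Fin d) → ((Fin d → ℝ) → ℝ) → (Fin d → ℝ) → ℝ
  | [], h => h
  | j :: js, h => pd j (pdList js h)

/-- Bounded `C^n` function with bounded partial derivatives up to order `n`. -/
def Cb {d : ℕ} (n : ℕ) (h : (Fin d → ℝ) → ℝ) : Prop :=
  ContDiff ℝ n h ∧
    ∀ js : List (Fin d), js.length ≤ n → ∃ C, ∀ x, |pdList js h x| ≤ C

/-- `τ` is a Stein kernel for the random vector `η`:
`E[(η − E[η]) · ∇h(η)] = E[⟨τ(η), ∇²h(η)⟩]` for all `h ∈ C²_b`. -/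
def IsSteinKernel {Ω : Type*} [MeasurableSpace Ω] (μ : Measure Ω) {d : ℕ}
    (η : Ω → Fin d → ℝ) (τ : (Fin d → ℝ) → Fin d → Fin d → ℝ) : Prop :=
  Measurable τ ∧ Integrable (fun ω => ‖η ω‖) μ ∧ Integrable (fun ω => ‖τ (η ω)‖) μ ∧
    ∀ h : (Fin d → ℝ) → ℝ, Cb 2 h →
      ∫ ω, ∑ j, (η ω j - ∫ ω', η ω' j ∂μ) * pd j h (η ω) ∂μ
        = ∫ ω, ∑ j, ∑ k, τ (η ω) j k * pd k (pd j h) (η ω) ∂μ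

section Aux

open Filter Topology

/-- Doob–Dynkin lemma for real-valued functions. -/
lemma doob_dynkin {Ω β : Type*} [MeasurableSpace β] (η : Ω → β) (f : Ω → ℝ)
    (hf : @Measurable Ω ℝ (MeasurableSpace.comap η inferInstance) _ f) :
    ∃ g : β → ℝ, Measurable g ∧ ∀ ω, f ω = g (η ω) := by
  classical
  set m := MeasurableSpace.comap η inferInstance with hm
  have hsm : @StronglyMeasurable Ω ℝ _ m f := @Measurable.stronglyMeasurable Ω ℝ f m _ _ _ _ _ hf
  have hfac : ∀ s : @SimpleFunc Ω m ℝ, ∃ g : β → ℝ, Measurable g ∧ ∀ ω, s ω = g (η ω) := by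
    intro s
    refine @SimpleFunc.induction Ω ℝ m _
      (fun s => ∃ g : β → ℝ, Measurable g ∧ ∀ ω, s ω = g (η ω)) ?_ ?_ s
    · intro c t ht
      obtain ⟨S, hS, hSt⟩ := ht
      refine ⟨fun x => if x ∈ S then c else 0,
        Measurable.ite hS measurable_const measurable_const, fun ω => ?_⟩
      simp only [SimpleFunc.coe_piecewise, SimpleFunc.coe_const, Set.piecewise]
      subst hSt
      rfl
    · rintro s₁ s₂ - ⟨g₁, hg₁, he₁⟩ ⟨g₂, hg₂, he₂⟩
      exact ⟨g₁ + g₂, hg₁.add hg₂, fun ω => by simp [he₁ ω, he₂ ω]⟩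
  choose g hgm hgeq using fun n => hfac (hsm.approx n)
  set S := {x | ∃ c : ℝ, Tendsto (fun n => g n x) atTop (𝓝 c)} with hSdef
  have hS : MeasurableSet S := measurableSet_exists_tendsto hgm
  set h : ℕ → β → ℝ := fun n x => if x ∈ S then g n x else 0 with hh
  have hconv : ∀ x, ∃ c, Tendsto (fun n => h n x) atTop (𝓝 c) := by
    intro x
    by_cases hx : x ∈ S
    · obtain ⟨c, hc⟩ := id hx
      exact ⟨c, by simpa [hh, hx] using hc⟩
    · exact ⟨0, by simpa [hh, hx] using tendsto_const_nhds⟩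
  set G : β → ℝ := fun x => limUnder atTop (fun n => h n x) with hG
  have hGt : ∀ x, Tendsto (fun n => h n x) atTop (𝓝 (G x)) := fun x =>
    tendsto_nhds_limUnder (hconv x)
  have hGm : Measurable G :=
    measurable_of_tendsto_metrizable (fun n => Measurable.ite hS (hgm n) measurable_const)
      (tendsto_pi_nhds.2 hGt)
  refine ⟨G, hGm, fun ω => ?_⟩
  have h1 : Tendsto (fun n => g n (η ω)) atTop (𝓝 (f ω)) := by
    have := hsm.tendsto_approx ω
    simpa [fun n => hgeq n ω] using this
  have hmem : η ω ∈ S := ⟨f ω, h1⟩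
  have h2 : Tendsto (fun n => h n (η ω)) atTop (𝓝 (f ω)) := by simpa [hh, hmem] using h1
  exact tendsto_nhds_unique h2 (hGt (η ω))

def Lmap {r d : ℕ} (V : Fin d → Fin r → ℝ) : (Fin r → ℝ) →L[ℝ] (Fin d → ℝ) :=
  LinearMap.toContinuousLinearMap (Matrix.mulVecLin (Matrix.of V))

variable {r d : ℕ} (V : Fin d → Fin r → ℝ) (a : Fin d → ℝ)

lemma Lmap_apply (x : Fin r → ℝ) (j : Fin d) : Lmap V x j = ∑ i, V j i * x i := by
  simp [Lmap, Matrix.mulVecLin_apply, Matrix.mulVec, dotProduct]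

lemma Lmap_single (i : Fin r) : Lmap V (Pi.single i 1) = fun j => V j i := by
  funext j
  simp [Lmap_apply, Pi.single_apply]

lemma clm_sum (φ : (Fin d → ℝ) →L[ℝ] ℝ) (v : Fin d → ℝ) :
    φ v = ∑ j, v j * φ (Pi.single j 1) := by
  conv_lhs => rw [← Finset.univ_sum_single v]
  rw [map_sum]
  refine Finset.sum_congr rfl fun j _ => ?_
  have : Pi.single j (v j) = v j • (Pi.single j 1 : Fin d → ℝ) := by
    simp [← Pi.single_smul]
  rw [this, _root_.map_smul, smul_eq_mul]

lemma pd_comp (h : (Fin d → ℝ) → ℝ) (hd : Differentiable ℝ h) (i : Fin r) (x : Fin r → ℝ) :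
    pd i (fun y => h (Lmap V y + a)) x = ∑ j, V j i * pd j h (Lmap V x + a) := by
  have hAd : HasFDerivAt (fun y => Lmap V y + a) (Lmap V) x :=
    ((Lmap V).hasFDerivAt).add_const a
  have hc : HasFDerivAt (fun y => h (Lmap V y + a))
      (((fderiv ℝ h (Lmap V x + a)).comp (Lmap V))) x :=
    ((hd (Lmap V x + a)).hasFDerivAt).comp x hAd
  rw [pd, hc.fderiv]
  simp only [ContinuousLinearMap.comp_apply, Lmap_single]
  exact clm_sum _ _

lemma pd_sum (c : Fin d → ℝ) (F : Fin d → (Fin r → ℝ) → ℝ)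
    (hF : ∀ j, Differentiable ℝ (F j)) (i : Fin r) (x : Fin r → ℝ) :
    pd i (fun y => ∑ j, c j * F j y) x = ∑ j, c j * pd i (F j) x := by
  have : fderiv ℝ (fun y => ∑ j, c j * F j y) x
      = ∑ j, fderiv ℝ (fun y => c j * F j y) x :=
    fderiv_fun_sum (fun j _ => ((hF j x).const_mul (c j)))
  rw [pd, this, ContinuousLinearMap.sum_apply]
  refine Finset.sum_congr rfl fun j _ => ?_
  rw [fderiv_const_mul (hF j x) (c j)]
  simp [pd]

lemma pd_contDiff1 (h : (Fin d → ℝ) → ℝ) (hC : ContDiff ℝ 2 h) (j : Fin d) :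
    ContDiff ℝ 1 (pd j h) :=
  (hC.fderiv_right (by norm_num)).clm_apply contDiff_const

lemma pd_contDiff0 (h : (Fin d → ℝ) → ℝ) (hC : ContDiff ℝ 1 h) (j : Fin d) :
    ContDiff ℝ 0 (pd j h) :=
  (hC.fderiv_right (by norm_num)).clm_apply contDiff_const

lemma pd2_comp (h : (Fin d → ℝ) → ℝ) (hC2 : ContDiff ℝ 2 h) (i i' : Fin r) (x : Fin r → ℝ) :
    pd i' (pd i (fun y => h (Lmap V y + a))) x
      = ∑ j, V j i * ∑ k, V k i' * pd k (pd j h) (Lmap V x + a) := by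
  have hd : Differentiable ℝ h := hC2.differentiable two_ne_zero
  have h1 : pd i (fun y => h (Lmap V y + a)) = fun y => ∑ j, V j i * pd j h (Lmap V y + a) :=
    funext (pd_comp V a h hd i)
  rw [h1]
  have hdj : ∀ j, Differentiable ℝ (pd j h) := fun j =>
    (pd_contDiff1 h hC2 j).differentiable one_ne_zero
  have hFj : ∀ j : Fin d, Differentiable ℝ (fun y => pd j h (Lmap V y + a)) := by
    intro j y
    exact ((hdj j) (Lmap V y + a)).comp y (((Lmap V).differentiable y).add_const a)
  rw [pd_sum (fun j => V j i) (fun j => fun y => pd j h (Lmap V y + a)) hFj i' x]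
  exact Finset.sum_congr rfl fun j _ => by rw [pd_comp V a (pd j h) (hdj j) i' x]

end Aux

/-- Affine transformation: if `ξ` has Stein kernel `τ`, then `Vξ + a` has a Stein kernel
given by `x ↦ E[V τ(ξ) Vᵀ | Vξ + a = x]`. -/
theorem stmt3 {Ω : Type*} [MeasurableSpace Ω] (μ : Measure Ω) [IsProbabilityMeasure μ]
    {r d : ℕ} (ξ : Ω → Fin r → ℝ) (hξm : Measurable ξ)
    (hcent : ∀ i, ∫ ω, ξ ω i ∂μ = 0)
    (τ : (Fin r → ℝ) → Fin r → Fin r → ℝ) (hτ : IsSteinKernel μ ξ τ)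
    (a : Fin d → ℝ) (V : Fin d → Fin r → ℝ) :
    ∃ τ' : (Fin d → ℝ) → Fin d → Fin d → ℝ,
      IsSteinKernel μ (fun ω j => (∑ i, V j i * ξ ω i) + a j) τ' ∧
      ∀ j k, (fun ω => τ' (fun j' => (∑ i, V j' i * ξ ω i) + a j') j k)
        =ᵐ[μ] μ[(fun ω => ∑ i, ∑ i', V j i * τ (ξ ω) i i' * V k i') |
            MeasurableSpace.comap (fun ω j' => (∑ i, V j' i * ξ ω i) + a j')
              inferInstance] := by
  classical
  obtain ⟨hτm, hξint, hτint, hstein⟩ := hτ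
  set η : Ω → Fin d → ℝ := fun ω j => (∑ i, V j i * ξ ω i) + a j with hηdef
  have hηm : Measurable η := by
    apply measurable_pi_lambda
    intro j
    exact (Finset.measurable_sum Finset.univ fun i _ =>
      (measurable_const.mul ((measurable_pi_apply i).comp hξm))).add measurable_const
  have hm' := hηm.comap_le
  haveI : SigmaFinite (μ.trim hm') := by infer_instance
  set f : Fin d → Fin d → Ω → ℝ :=
    fun j k ω => ∑ i, ∑ i', V j i * τ (ξ ω) i i' * V k i' with hfdef
  have hτξm : ∀ i i', Measurable fun ω => τ (ξ ω) i i' := fun i i' =>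
    (measurable_pi_apply i').comp ((measurable_pi_apply i).comp (hτm.comp hξm))
  have hfm : ∀ j k, Measurable (f j k) := fun j k =>
    Finset.measurable_sum _ fun i _ => Finset.measurable_sum _ fun i' _ =>
      ((hτξm i i').const_mul _).mul_const _
  have hτnorm : ∀ ω i i', |τ (ξ ω) i i'| ≤ ‖τ (ξ ω)‖ := by
    intro ω i i'
    calc |τ (ξ ω) i i'| = ‖τ (ξ ω) i i'‖ := (Real.norm_eq_abs _).symm
    _ ≤ ‖τ (ξ ω) i‖ := norm_le_pi_norm _ i'
    _ ≤ ‖τ (ξ ω)‖ := norm_le_pi_norm _ i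
  have habs : ∀ j k ω,
      |f j k ω| ≤ (∑ i : Fin r, ∑ i' : Fin r, |V j i| * |V k i'|) * ‖τ (ξ ω)‖ := by
    intro j k ω
    calc |f j k ω| ≤ ∑ i, |∑ i', V j i * τ (ξ ω) i i' * V k i'| :=
        Finset.abs_sum_le_sum_abs _ _
    _ ≤ ∑ i, ∑ i', |V j i * τ (ξ ω) i i' * V k i'| :=
        Finset.sum_le_sum fun i _ => Finset.abs_sum_le_sum_abs _ _
    _ ≤ ∑ i, ∑ i', (|V j i| * |V k i'|) * ‖τ (ξ ω)‖ := by
        refine Finset.sum_le_sum fun i _ => Finset.sum_le_sum fun i' _ => ?_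
        rw [abs_mul, abs_mul]
        calc |V j i| * |τ (ξ ω) i i'| * |V k i'|
            = (|V j i| * |V k i'|) * |τ (ξ ω) i i'| := by ring
        _ ≤ (|V j i| * |V k i'|) * ‖τ (ξ ω)‖ :=
            mul_le_mul_of_nonneg_left (hτnorm ω i i') (by positivity)
    _ = _ := by
        rw [Finset.sum_mul]
        exact Finset.sum_congr rfl fun i _ => by rw [Finset.sum_mul]
  have hfint : ∀ j k, Integrable (f j k) μ := by
    intro j k
    refine Integrable.mono' (hτint.const_mul (∑ i : Fin r, ∑ i' : Fin r, |V j i| * |V k i'|)) (hfm j k).aestronglyMeasurable ?_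
    exact Filter.Eventually.of_forall fun ω => by
      rw [Real.norm_eq_abs]; exact habs j k ω
  choose g hgm hgeq using fun (j k : Fin d) =>
    doob_dynkin η (μ[f j k | MeasurableSpace.comap η inferInstance]) stronglyMeasurable_condExp.measurable
  set τ' : (Fin d → ℝ) → Fin d → Fin d → ℝ := fun x j k => g j k x with hτ'def
  have hτ'm : Measurable τ' :=
    measurable_pi_lambda _ fun j => measurable_pi_lambda _ fun k => hgm j k
  have hτ'η : ∀ j k ω, τ' (η ω) j k = (μ[f j k | MeasurableSpace.comap η inferInstance]) ω := fun j k ω => (hgeq j k ω).symm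
  -- integrability of coordinates of ξ
  have hξicomp : ∀ i : Fin r, Integrable (fun ω => ξ ω i) μ := by
    intro i
    refine Integrable.mono' hξint ((measurable_pi_apply i).comp hξm).aestronglyMeasurable ?_
    exact Filter.Eventually.of_forall fun ω => norm_le_pi_norm (ξ ω) i
  -- integrability of ‖η‖
  have hηnormint : Integrable (fun ω => ‖η ω‖) μ := by
    set C := ∑ j : Fin d, ∑ i : Fin r, |V j i| with hCdef
    have hC0 : 0 ≤ C := Finset.sum_nonneg fun j _ => Finset.sum_nonneg fun i _ => abs_nonneg _
    refine Integrable.mono' ((hξint.const_mul C).add (integrable_const ‖a‖))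
      (hηm.norm).aestronglyMeasurable ?_
    refine Filter.Eventually.of_forall fun ω => ?_
    rw [Real.norm_eq_abs, abs_norm]
    have hnn : 0 ≤ C * ‖ξ ω‖ + ‖a‖ := by positivity
    refine (pi_norm_le_iff_of_nonneg hnn).2 fun j => ?_
    rw [Real.norm_eq_abs]
    have h1 : |η ω j| ≤ (∑ i, |V j i|) * ‖ξ ω‖ + |a j| := by
      calc |η ω j| ≤ |∑ i, V j i * ξ ω i| + |a j| := abs_add_le _ _
      _ ≤ (∑ i, |V j i * ξ ω i|) + |a j| :=
          add_le_add_left (Finset.abs_sum_le_sum_abs _ _) _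
      _ ≤ (∑ i, |V j i| * ‖ξ ω‖) + |a j| := by
          refine add_le_add_left (Finset.sum_le_sum fun i _ => ?_) _
          rw [abs_mul]
          exact mul_le_mul_of_nonneg_left
            ((Real.norm_eq_abs _) ▸ norm_le_pi_norm (ξ ω) i) (abs_nonneg _)
      _ = (∑ i, |V j i|) * ‖ξ ω‖ + |a j| := by rw [Finset.sum_mul]
    refine h1.trans (add_le_add ?_ ?_)
    · exact mul_le_mul_of_nonneg_right
        (Finset.single_le_sum (f := fun j => ∑ i : Fin r, |V j i|)
          (fun _ _ => Finset.sum_nonneg fun _ _ => abs_nonneg _) (Finset.mem_univ j))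
        (norm_nonneg _)
    · exact (Real.norm_eq_abs _) ▸ norm_le_pi_norm a j
  -- integrability of the conditional expectations
  have hceint : ∀ j k, Integrable (fun ω => τ' (η ω) j k) μ := by
    intro j k
    have : (fun ω => τ' (η ω) j k) = μ[f j k | MeasurableSpace.comap η inferInstance] := funext fun ω => hτ'η j k ω
    rw [this]
    exact integrable_condExp
  have hτ'normint : Integrable (fun ω => ‖τ' (η ω)‖) μ := by
    refine Integrable.mono' (integrable_finset_sum Finset.univ fun j _ =>
      integrable_finset_sum Finset.univ fun k _ => (hceint j k).abs)
      (((hτ'm.comp hηm)).norm).aestronglyMeasurable ?_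
    refine Filter.Eventually.of_forall fun ω => ?_
    rw [Real.norm_eq_abs, abs_norm]
    have hnn : 0 ≤ ∑ j : Fin d, ∑ k : Fin d, |τ' (η ω) j k| :=
      Finset.sum_nonneg fun j _ => Finset.sum_nonneg fun k _ => abs_nonneg _
    refine (pi_norm_le_iff_of_nonneg hnn).2 fun j => ?_
    refine (pi_norm_le_iff_of_nonneg hnn).2 fun k => ?_
    rw [Real.norm_eq_abs]
    calc |τ' (η ω) j k| ≤ ∑ k', |τ' (η ω) j k'| :=
        Finset.single_le_sum (f := fun k' => |τ' (η ω) j k'|)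
          (fun _ _ => abs_nonneg _) (Finset.mem_univ k)
    _ ≤ ∑ j', ∑ k', |τ' (η ω) j' k'| :=
        Finset.single_le_sum (f := fun j' => ∑ k', |τ' (η ω) j' k'|)
          (fun _ _ => Finset.sum_nonneg fun _ _ => abs_nonneg _) (Finset.mem_univ j)
  -- the Stein identity
  have hmain : ∀ h : (Fin d → ℝ) → ℝ, Cb 2 h →
      ∫ ω, ∑ j, (η ω j - ∫ ω', η ω' j ∂μ) * pd j h (η ω) ∂μ
        = ∫ ω, ∑ j, ∑ k, τ' (η ω) j k * pd k (pd j h) (η ω) ∂μ := by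
    intro h hCb
    obtain ⟨hC2₀, hbd⟩ := hCb
    have hC2' : ContDiff ℝ 2 h := by exact_mod_cast hC2₀
    have hd : Differentiable ℝ h := hC2'.differentiable two_ne_zero
    set H : (Fin r → ℝ) → ℝ := fun y => h (Lmap V y + a) with hHdef
    have hηA : ∀ ω, η ω = Lmap V (ξ ω) + a := by
      intro ω
      funext j
      simp [hηdef, Lmap_apply]
    -- H is Cb 2
    have CbH : Cb 2 H := by
      constructor
      · have : ContDiff ℝ 2 H := hC2'.comp (((Lmap V).contDiff).add contDiff_const)
        exact_mod_cast this
      · intro js hlen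
        match js with
        | [] =>
          obtain ⟨C, hC⟩ := hbd [] (by simp)
          exact ⟨C, fun x => hC (Lmap V x + a)⟩
        | [i] =>
          choose C1 hC1 using fun j : Fin d => hbd [j] (by simp)
          refine ⟨∑ j, |V j i| * C1 j, fun x => ?_⟩
          have : pdList [i] H x = ∑ j, V j i * pd j h (Lmap V x + a) :=
            pd_comp V a h hd i x
          rw [this]
          calc |∑ j, V j i * pd j h (Lmap V x + a)|
              ≤ ∑ j, |V j i * pd j h (Lmap V x + a)| := Finset.abs_sum_le_sum_abs _ _
          _ ≤ ∑ j, |V j i| * C1 j := by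
              refine Finset.sum_le_sum fun j _ => ?_
              rw [abs_mul]
              exact mul_le_mul_of_nonneg_left (hC1 j (Lmap V x + a)) (abs_nonneg _)
        | [i, i'] =>
          choose C2 hC2b using fun (j k : Fin d) => hbd [k, j] (by simp)
          refine ⟨∑ j, |V j i'| * ∑ k, |V k i| * C2 j k, fun x => ?_⟩
          have : pdList [i, i'] H x
              = ∑ j, V j i' * ∑ k, V k i * pd k (pd j h) (Lmap V x + a) :=
            pd2_comp V a h hC2' i' i x
          rw [this]
          calc |∑ j, V j i' * ∑ k, V k i * pd k (pd j h) (Lmap V x + a)|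
              ≤ ∑ j, |V j i' * ∑ k, V k i * pd k (pd j h) (Lmap V x + a)| :=
              Finset.abs_sum_le_sum_abs _ _
          _ ≤ ∑ j, |V j i'| * ∑ k, |V k i| * C2 j k := by
              refine Finset.sum_le_sum fun j _ => ?_
              rw [abs_mul]
              refine mul_le_mul_of_nonneg_left ?_ (abs_nonneg _)
              calc |∑ k, V k i * pd k (pd j h) (Lmap V x + a)|
                  ≤ ∑ k, |V k i * pd k (pd j h) (Lmap V x + a)| :=
                  Finset.abs_sum_le_sum_abs _ _
              _ ≤ ∑ k, |V k i| * C2 j k := by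
                  refine Finset.sum_le_sum fun k _ => ?_
                  rw [abs_mul]
                  exact mul_le_mul_of_nonneg_left (hC2b j k (Lmap V x + a)) (abs_nonneg _)
        | _ :: _ :: _ :: _ => simp at hlen
    have key := hstein H CbH
    -- mean of η
    have hmean : ∀ j, ∫ ω, η ω j ∂μ = a j := by
      intro j
      have : (fun ω => η ω j) = fun ω => (∑ i, V j i * ξ ω i) + a j := rfl
      rw [this, integral_add (integrable_finset_sum _ fun i _ => (hξicomp i).const_mul _)
        (integrable_const _),
        integral_finset_sum _ (fun i _ => (hξicomp i).const_mul _)]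
      simp [integral_const_mul, hcent]
    -- left-hand sides agree
    have hL : ∫ ω, ∑ j, (η ω j - ∫ ω', η ω' j ∂μ) * pd j h (η ω) ∂μ
        = ∫ ω, ∑ i, (ξ ω i - ∫ ω', ξ ω' i ∂μ) * pd i H (ξ ω) ∂μ := by
      refine integral_congr_ae (Filter.Eventually.of_forall fun ω => ?_)
      simp only [hmean, hcent, sub_zero]
      have hη_j : ∀ j, η ω j - a j = ∑ i, V j i * ξ ω i := fun j =>
        add_sub_cancel_right _ _
      have hpdH : ∀ i, pd i H (ξ ω) = ∑ j, V j i * pd j h (η ω) := by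
        intro i
        rw [show pd i H (ξ ω) = ∑ j, V j i * pd j h (Lmap V (ξ ω) + a) from
          pd_comp V a h hd i (ξ ω), ← hηA ω]
      calc ∑ j, (η ω j - a j) * pd j h (η ω)
          = ∑ j, (∑ i, V j i * ξ ω i) * pd j h (η ω) := by
            refine Finset.sum_congr rfl fun j _ => ?_
            rw [hη_j j]
      _ = ∑ j, ∑ i, ξ ω i * (V j i * pd j h (η ω)) := by
            refine Finset.sum_congr rfl fun j _ => ?_
            rw [Finset.sum_mul]
            exact Finset.sum_congr rfl fun i _ => by ring
      _ = ∑ i, ∑ j, ξ ω i * (V j i * pd j h (η ω)) := Finset.sum_comm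
      _ = ∑ i, ξ ω i * pd i H (ξ ω) := by
            refine Finset.sum_congr rfl fun i _ => ?_
            rw [hpdH i, Finset.mul_sum]
    -- right-hand side of Stein identity for ξ rewritten
    have hR : ∫ ω, ∑ i, ∑ i', τ (ξ ω) i i' * pd i' (pd i H) (ξ ω) ∂μ
        = ∫ ω, ∑ j, ∑ k, f j k ω * pd k (pd j h) (η ω) ∂μ := by
      refine integral_congr_ae (Filter.Eventually.of_forall fun ω => ?_)
      have hpd2 : ∀ i i', pd i' (pd i H) (ξ ω)
          = ∑ j, V j i * ∑ k, V k i' * pd k (pd j h) (η ω) := by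
        intro i i'
        rw [show pd i' (pd i H) (ξ ω)
            = ∑ j, V j i * ∑ k, V k i' * pd k (pd j h) (Lmap V (ξ ω) + a) from
          pd2_comp V a h hC2' i i' (ξ ω), ← hηA ω]
      calc ∑ i, ∑ i', τ (ξ ω) i i' * pd i' (pd i H) (ξ ω)
          = ∑ i, ∑ i', ∑ j, ∑ k,
              V j i * τ (ξ ω) i i' * V k i' * pd k (pd j h) (η ω) := by
            refine Finset.sum_congr rfl fun i _ => Finset.sum_congr rfl fun i' _ => ?_
            rw [hpd2 i i']
            simp only [Finset.mul_sum]
            exact Finset.sum_congr rfl fun j _ =>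
              Finset.sum_congr rfl fun k _ => by ring
      _ = ∑ j, ∑ k, ∑ i, ∑ i',
              V j i * τ (ξ ω) i i' * V k i' * pd k (pd j h) (η ω) := by
            calc ∑ i, ∑ i', ∑ j, ∑ k,
                V j i * τ (ξ ω) i i' * V k i' * pd k (pd j h) (η ω)
                = ∑ i, ∑ j, ∑ i', ∑ k,
                    V j i * τ (ξ ω) i i' * V k i' * pd k (pd j h) (η ω) :=
                  Finset.sum_congr rfl fun i _ => Finset.sum_comm
            _ = ∑ j, ∑ i, ∑ i', ∑ k,
                    V j i * τ (ξ ω) i i' * V k i' * pd k (pd j h) (η ω) :=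
                  Finset.sum_comm
            _ = ∑ j, ∑ i, ∑ k, ∑ i',
                    V j i * τ (ξ ω) i i' * V k i' * pd k (pd j h) (η ω) :=
                  Finset.sum_congr rfl fun j _ =>
                    Finset.sum_congr rfl fun i _ => Finset.sum_comm
            _ = ∑ j, ∑ k, ∑ i, ∑ i',
                    V j i * τ (ξ ω) i i' * V k i' * pd k (pd j h) (η ω) :=
                  Finset.sum_congr rfl fun j _ => Finset.sum_comm
      _ = ∑ j, ∑ k, f j k ω * pd k (pd j h) (η ω) := by
            refine Finset.sum_congr rfl fun j _ => Finset.sum_congr rfl fun k _ => ?_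
            rw [hfdef]
            rw [Finset.sum_mul]
            exact Finset.sum_congr rfl fun i _ => by rw [Finset.sum_mul]
    -- integrability of products
    have hGbd : ∀ j k : Fin d, ∃ C, ∀ x, |pd k (pd j h) x| ≤ C := fun j k =>
      hbd [k, j] (by simp)
    have hGcont : ∀ j k : Fin d, Continuous (pd k (pd j h)) := fun j k =>
      (pd_contDiff0 (pd j h) (pd_contDiff1 h hC2' j) k).continuous
    have hintfG : ∀ j k : Fin d, Integrable (fun ω => f j k ω * pd k (pd j h) (η ω)) μ := by
      intro j k
      obtain ⟨C, hC⟩ := hGbd j k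
      have := Integrable.bdd_mul (hfint j k)
        (((hGcont j k).measurable.comp hηm)).aestronglyMeasurable
        (Filter.Eventually.of_forall fun ω => by rw [Real.norm_eq_abs]; exact hC (η ω))
      refine this.congr (Filter.Eventually.of_forall fun ω => mul_comm _ _)
    have hintceG : ∀ j k : Fin d,
        Integrable (fun ω => τ' (η ω) j k * pd k (pd j h) (η ω)) μ := by
      intro j k
      obtain ⟨C, hC⟩ := hGbd j k
      have := Integrable.bdd_mul (hceint j k)
        (((hGcont j k).measurable.comp hηm)).aestronglyMeasurable
        (Filter.Eventually.of_forall fun ω => by rw [Real.norm_eq_abs]; exact hC (η ω))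
      refine this.congr (Filter.Eventually.of_forall fun ω => mul_comm _ _)
    -- conditional expectation step
    have hstep5 : ∀ j k : Fin d, ∫ ω, f j k ω * pd k (pd j h) (η ω) ∂μ
        = ∫ ω, τ' (η ω) j k * pd k (pd j h) (η ω) ∂μ := by
      intro j k
      set G : Ω → ℝ := fun ω => pd k (pd j h) (η ω) with hGdef
      have hGmeas : @Measurable Ω ℝ (MeasurableSpace.comap η inferInstance) _ G :=
        Measurable.comp (hGcont j k).measurable (comap_measurable η)
      have hGsm : @StronglyMeasurable Ω ℝ _ (MeasurableSpace.comap η inferInstance) G :=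
        @Measurable.stronglyMeasurable Ω ℝ G (MeasurableSpace.comap η inferInstance) _ _ _ _ _ hGmeas
      obtain ⟨C, hC⟩ := hGbd j k
      have hmul : Integrable (G * f j k) μ := by
        refine Integrable.bdd_mul (hfint j k) ((hGcont j k).measurable.comp hηm).aestronglyMeasurable
          (Filter.Eventually.of_forall fun ω => by rw [Real.norm_eq_abs]; exact hC (η ω))
      have hpull := condExp_mul_of_stronglyMeasurable_left hGsm hmul (hfint j k)
      calc ∫ ω, f j k ω * G ω ∂μ = ∫ ω, (G * f j k) ω ∂μ := by
            refine integral_congr_ae (Filter.Eventually.of_forall fun ω => ?_)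
            simp [mul_comm]
      _ = ∫ ω, (μ[G * f j k | MeasurableSpace.comap η inferInstance]) ω ∂μ := (integral_condExp hm').symm
      _ = ∫ ω, (G * μ[f j k | MeasurableSpace.comap η inferInstance]) ω ∂μ := integral_congr_ae hpull
      _ = ∫ ω, τ' (η ω) j k * G ω ∂μ := by
            refine integral_congr_ae (Filter.Eventually.of_forall fun ω => ?_)
            simp [hτ'η j k ω, mul_comm]
    -- put everything together
    calc ∫ ω, ∑ j, (η ω j - ∫ ω', η ω' j ∂μ) * pd j h (η ω) ∂μ
        = ∫ ω, ∑ i, (ξ ω i - ∫ ω', ξ ω' i ∂μ) * pd i H (ξ ω) ∂μ := hL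
    _ = ∫ ω, ∑ i, ∑ i', τ (ξ ω) i i' * pd i' (pd i H) (ξ ω) ∂μ := key
    _ = ∫ ω, ∑ j, ∑ k, f j k ω * pd k (pd j h) (η ω) ∂μ := hR
    _ = ∑ j, ∑ k, ∫ ω, f j k ω * pd k (pd j h) (η ω) ∂μ := by
        rw [integral_finset_sum _ (fun j _ =>
          integrable_finset_sum _ (fun k _ => hintfG j k))]
        exact Finset.sum_congr rfl fun j _ =>
          integral_finset_sum _ (fun k _ => hintfG j k)
    _ = ∑ j, ∑ k, ∫ ω, τ' (η ω) j k * pd k (pd j h) (η ω) ∂μ :=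
        Finset.sum_congr rfl fun j _ => Finset.sum_congr rfl fun k _ => hstep5 j k
    _ = ∫ ω, ∑ j, ∑ k, τ' (η ω) j k * pd k (pd j h) (η ω) ∂μ := by
        rw [integral_finset_sum _ (fun j _ =>
          integrable_finset_sum _ (fun k _ => hintceG j k))]
        exact Finset.sum_congr rfl fun j _ =>
          (integral_finset_sum _ (fun k _ => hintceG j k)).symm
  refine ⟨τ', ⟨hτ'm, hηnormint, hτ'normint, hmain⟩, fun j k => ?_⟩
  exact Filter.Eventually.of_forall fun ω => (hgeq j k ω).symm
end
end

section
/- Let X be a random vector in R^d and ε a centered real random variable independent of X having a Stein kernel τ. If E[‖εX‖_∞] + E[‖τ(ε)X^{⊗2}‖_∞] < ∞, then εX has a Stein kernel given by x ↦ E[τ(ε) X^{⊗2} | εX = x], where X^{⊗2} = (X_j X_k)_{j,k}. -/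
open MeasureTheory ProbabilityTheory

noncomputable section

section Helpers

variable {d : ℕ}

lemma clm_apply_eq_sum (L : (Fin d → ℝ) →L[ℝ] ℝ) (x : Fin d → ℝ) :
    L x = ∑ j, x j * L (Pi.single j 1) := by
  conv_lhs => rw [← Finset.univ_sum_single x]
  rw [map_sum]
  refine Finset.sum_congr rfl fun j _ => ?_
  have hx : Pi.single j (x j) = x j • (Pi.single j (1 : ℝ) : Fin d → ℝ) := by
    rw [← Pi.single_smul, smul_eq_mul, mul_one]
  rw [hx, _root_.map_smul, smul_eq_mul]

lemma hasDerivAt_comp_smul {h : (Fin d → ℝ) → ℝ} (hh : Differentiable ℝ h)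
    (x : Fin d → ℝ) (t : ℝ) :
    HasDerivAt (fun s : ℝ => h (s • x)) (∑ j, x j * pd j h (t • x)) t := by
  have h1 : HasDerivAt (fun s : ℝ => s • x) ((1 : ℝ) • x) t := (hasDerivAt_id t).smul_const x
  have h2 := ((hh (t • x)).hasFDerivAt).comp_hasDerivAt t h1
  have h3 : (fderiv ℝ h (t • x)) ((1 : ℝ) • x) = ∑ j, x j * pd j h (t • x) := by
    rw [one_smul, clm_apply_eq_sum]; rfl
  rw [h3] at h2
  exact h2

lemma contDiff_pd {h : (Fin d → ℝ) → ℝ} (hh : ContDiff ℝ 2 h) (j : Fin d) :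
    ContDiff ℝ 1 (pd j h) :=
  (hh.fderiv_right (by norm_num)).clm_apply contDiff_const

lemma continuous_pd2 {h : (Fin d → ℝ) → ℝ} (hh : ContDiff ℝ 2 h) (j k : Fin d) :
    Continuous (pd k (pd j h)) :=
  ((((contDiff_pd hh j).fderiv_right (m := 0) (by norm_num)).clm_apply contDiff_const)).continuous

lemma hasDerivAt_sum_pd {h : (Fin d → ℝ) → ℝ} (hh : ContDiff ℝ 2 h)
    (x : Fin d → ℝ) (t : ℝ) :
    HasDerivAt (fun s : ℝ => ∑ j, x j * pd j h (s • x))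
      (∑ j, x j * ∑ k, x k * pd k (pd j h) (t • x)) t :=
  HasDerivAt.fun_sum fun j _ =>
    (hasDerivAt_comp_smul ((contDiff_pd hh j).differentiable one_ne_zero) x t).const_mul (x j)

lemma matrix_norm_le (M : Fin d → Fin d → ℝ) : ‖M‖ ≤ ∑ j, ∑ k, |M j k| := by
  rw [pi_norm_le_iff_of_nonneg (by positivity)]
  intro j
  refine le_trans ?_ (Finset.single_le_sum (f := fun j => ∑ k, |M j k|)
    (fun i _ => by positivity) (Finset.mem_univ j))
  rw [pi_norm_le_iff_of_nonneg (by positivity)]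
  intro k
  simpa [Real.norm_eq_abs] using
    Finset.single_le_sum (f := fun k => |M j k|) (fun i _ => abs_nonneg _) (Finset.mem_univ k)

end Helpers

/-- One-dimensional Stein kernel: `E[(ε − E[ε]) h'(ε)] = E[τ(ε) h''(ε)]` for bounded `C²`
functions `h` with bounded derivatives. -/
def IsSteinKernel1 {Ω : Type*} [MeasurableSpace Ω] (μ : Measure Ω)
    (ε : Ω → ℝ) (τ : ℝ → ℝ) : Prop :=
  Measurable τ ∧ Integrable ε μ ∧ Integrable (fun ω => τ (ε ω)) μ ∧
    ∀ h : ℝ → ℝ, (ContDiff ℝ 2 h ∧ (∃ C, ∀ x, |h x| ≤ C) ∧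
        (∃ C, ∀ x, |deriv h x| ≤ C) ∧ (∃ C, ∀ x, |deriv (deriv h) x| ≤ C)) →
      ∫ ω, (ε ω - ∫ ω', ε ω' ∂μ) * deriv h (ε ω) ∂μ
        = ∫ ω, τ (ε ω) * deriv (deriv h) (ε ω) ∂μ

/-- The candidate Stein kernel for `εX`, defined through `condDistrib`. -/
noncomputable def tau2 {Ω : Type*} [MeasurableSpace Ω] (μ : Measure Ω) [IsFiniteMeasure μ]
    {d : ℕ} (X : Ω → Fin d → ℝ) (ε : Ω → ℝ) (τ : ℝ → ℝ) :
    (Fin d → ℝ) → Fin d → Fin d → ℝ :=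
  fun x j k => ∫ y : ℝ × (Fin d → ℝ), τ y.1 * (y.2 j * y.2 k)
    ∂condDistrib (fun ω => (ε ω, X ω)) (fun ω j => ε ω * X ω j) μ x

/-- Auxiliary integrand. -/
noncomputable def phi1 {d : ℕ} (h : (Fin d → ℝ) → ℝ) : ℝ × (Fin d → ℝ) → ℝ :=
  fun p => p.1 * ∑ j, p.2 j * pd j h (p.1 • p.2)

/-- Auxiliary integrand. -/
noncomputable def phi2 {d : ℕ} (h : (Fin d → ℝ) → ℝ) (τ : ℝ → ℝ) : ℝ × (Fin d → ℝ) → ℝ :=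
  fun p => τ p.1 * ∑ j, p.2 j * ∑ k, p.2 k * pd k (pd j h) (p.1 • p.2)

/-- Multiplicative perturbation: if `ε` is centered, independent of `X`, and has Stein
kernel `τ`, then `εX` has Stein kernel `x ↦ E[τ(ε) X^{⊗2} | εX = x]`. -/
theorem stmt4 {Ω : Type*} [MeasurableSpace Ω] (μ : Measure Ω) [IsProbabilityMeasure μ]
    {d : ℕ} (X : Ω → Fin d → ℝ) (ε : Ω → ℝ) (hXm : Measurable X) (hεm : Measurable ε)
    (hcent : ∫ ω, ε ω ∂μ = 0) (hindep : IndepFun ε X μ)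
    (τ : ℝ → ℝ) (hτ : IsSteinKernel1 μ ε τ)
    (hint1 : Integrable (fun ω => ‖(fun j : Fin d => ε ω * X ω j)‖) μ)
    (hint2 : Integrable
      (fun ω => ‖(fun p : Fin d × Fin d => τ (ε ω) * (X ω p.1 * X ω p.2))‖) μ) :
    ∃ τ' : (Fin d → ℝ) → Fin d → Fin d → ℝ,
      IsSteinKernel μ (fun ω j => ε ω * X ω j) τ' ∧
      ∀ j k, (fun ω => τ' (fun j' => ε ω * X ω j') j k)
        =ᵐ[μ] μ[(fun ω => τ (ε ω) * (X ω j * X ω k)) |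
            MeasurableSpace.comap (fun ω j' => ε ω * X ω j') inferInstance] := by
  classical
  obtain ⟨hτm, hεint, hτεint, hstein⟩ := hτ
  have hηm : Measurable (fun ω (j : Fin d) => ε ω * X ω j) :=
    measurable_pi_lambda _ fun j => hεm.mul ((measurable_pi_apply j).comp hXm)
  have hm' := hηm.comap_le
  have hYm : Measurable (fun ω => (ε ω, X ω)) := hεm.prodMk hXm
  have hf_meas : ∀ j k : Fin d,
      Measurable (fun y : ℝ × (Fin d → ℝ) => τ y.1 * (y.2 j * y.2 k)) := fun j k =>
    (hτm.comp measurable_fst).mul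
      (((measurable_pi_apply j).comp measurable_snd).mul
        ((measurable_pi_apply k).comp measurable_snd))
  have hf_int : ∀ j k : Fin d, Integrable (fun ω => τ (ε ω) * (X ω j * X ω k)) μ := by
    intro j k
    refine hint2.mono'
      ((((hf_meas j k).comp hYm) :
          Measurable fun ω => τ (ε ω) * (X ω j * X ω k)).aestronglyMeasurable)
      (ae_of_all _ fun ω => ?_)
    exact norm_le_pi_norm (fun p : Fin d × Fin d => τ (ε ω) * (X ω p.1 * X ω p.2)) (j, k)
  have hcond : ∀ j k : Fin d,
      μ[(fun ω => τ (ε ω) * (X ω j * X ω k)) |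
          MeasurableSpace.comap (fun ω (j' : Fin d) => ε ω * X ω j') inferInstance]
        =ᵐ[μ] fun ω => tau2 μ X ε τ (fun j' => ε ω * X ω j') j k := fun j k =>
    condExp_ae_eq_integral_condDistrib (X := fun ω (j : Fin d) => ε ω * X ω j)
      (Y := fun ω => (ε ω, X ω)) hηm hYm.aemeasurable
      (hf_meas j k).stronglyMeasurable (hf_int j k)
  have hτ'meas : Measurable (tau2 μ X ε τ) := by
    refine measurable_pi_lambda _ fun j => measurable_pi_lambda _ fun k => ?_
    exact (MeasureTheory.StronglyMeasurable.integral_kernel_prod_right'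
      (κ := condDistrib (fun ω => (ε ω, X ω)) (fun ω (j : Fin d) => ε ω * X ω j) μ)
      (f := fun p : (Fin d → ℝ) × (ℝ × (Fin d → ℝ)) => τ p.2.1 * (p.2.2 j * p.2.2 k))
      (((hf_meas j k).comp measurable_snd).stronglyMeasurable)).measurable
  have hτ'int : ∀ j k, Integrable (fun ω => tau2 μ X ε τ (fun j' => ε ω * X ω j') j k) μ :=
    fun j k => integrable_condExp.congr (hcond j k)
  have hτ'norm : Integrable (fun ω => ‖tau2 μ X ε τ (fun j' => ε ω * X ω j')‖) μ := by
    refine Integrable.mono'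
      (g := fun ω => ∑ j, ∑ k, |tau2 μ X ε τ (fun j' => ε ω * X ω j') j k|)
      (integrable_finset_sum _ fun j _ => integrable_finset_sum _ fun k _ => (hτ'int j k).abs)
      (((hτ'meas.comp hηm).norm :
          Measurable fun ω => ‖tau2 μ X ε τ (fun j' => ε ω * X ω j')‖).aestronglyMeasurable)
      (ae_of_all _ fun ω => ?_)
    rw [Real.norm_eq_abs, abs_norm]
    exact matrix_norm_le _
  refine ⟨tau2 μ X ε τ, ⟨hτ'meas, hint1, hτ'norm, ?_⟩, fun j k => (hcond j k).symm⟩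
  have hνρ := (indepFun_iff_map_prod_eq_prod_map_map hεm.aemeasurable hXm.aemeasurable).mp hindep
  haveI : IsProbabilityMeasure (Measure.map ε μ) := Measure.isProbabilityMeasure_map hεm.aemeasurable
  haveI : IsProbabilityMeasure (Measure.map X μ) := Measure.isProbabilityMeasure_map hXm.aemeasurable
  have step0 : ∀ j : Fin d, ∫ ω', ε ω' * X ω' j ∂μ = 0 := by
    intro j
    have hi : IndepFun ε (fun ω => X ω j) μ :=
      hindep.comp measurable_id (measurable_pi_apply j)
    have h2 := hi.integral_mul_eq_mul_integral hεm.aestronglyMeasurable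
      ((measurable_pi_apply j).comp hXm).aestronglyMeasurable
    calc ∫ ω', ε ω' * X ω' j ∂μ = ∫ ω', (ε * fun ω => X ω j) ω' ∂μ := rfl
      _ = (∫ ω', ε ω' ∂μ) * ∫ ω', X ω' j ∂μ := h2
      _ = 0 := by rw [hcent, zero_mul]
  intro h hC
  obtain ⟨hhC, hCbd⟩ := hC
  obtain ⟨C0, hC0⟩ := hCbd [] (by simp)
  choose C1 hC1 using fun j : Fin d => hCbd [j] (by simp)
  choose C2 hC2 using fun j k : Fin d => hCbd [k, j] (by simp)
  have hdiff : Differentiable ℝ h := hhC.differentiable (by norm_num)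
  have hpdcont : ∀ j, Continuous (pd j h) := fun j => (contDiff_pd hhC j).continuous
  have hpd2cont : ∀ j k, Continuous (pd k (pd j h)) := fun j k => continuous_pd2 hhC j k
  have d1 : ∀ (x : Fin d → ℝ) (t : ℝ),
      deriv (fun s : ℝ => h (s • x)) t = ∑ j, x j * pd j h (t • x) :=
    fun x t => (hasDerivAt_comp_smul hdiff x t).deriv
  have d2 : ∀ (x : Fin d → ℝ) (t : ℝ),
      deriv (deriv (fun s : ℝ => h (s • x))) t
        = ∑ j, x j * ∑ k, x k * pd k (pd j h) (t • x) := by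
    intro x t
    have hfe : deriv (fun s : ℝ => h (s • x)) = fun s => ∑ j, x j * pd j h (s • x) :=
      funext (d1 x)
    rw [hfe]
    exact (hasDerivAt_sum_pd hhC x t).deriv
  have steinx : ∀ x : Fin d → ℝ,
      ∫ ω, ε ω * ∑ j, x j * pd j h (ε ω • x) ∂μ
        = ∫ ω, τ (ε ω) * ∑ j, x j * ∑ k, x k * pd k (pd j h) (ε ω • x) ∂μ := by
    intro x
    have hsm : ContDiff ℝ 2 fun s : ℝ => h (s • x) :=
      hhC.comp (contDiff_id.smul contDiff_const)
    have hb1 : ∀ t, |deriv (fun s : ℝ => h (s • x)) t| ≤ ∑ j, |x j| * C1 j := by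
      intro t; rw [d1]
      refine (Finset.abs_sum_le_sum_abs _ _).trans (Finset.sum_le_sum fun j _ => ?_)
      rw [abs_mul]
      exact mul_le_mul_of_nonneg_left (hC1 j _) (abs_nonneg _)
    have hb2 : ∀ t, |deriv (deriv fun s : ℝ => h (s • x)) t|
        ≤ ∑ j, |x j| * ∑ k, |x k| * C2 j k := by
      intro t; rw [d2]
      refine (Finset.abs_sum_le_sum_abs _ _).trans (Finset.sum_le_sum fun j _ => ?_)
      rw [abs_mul]
      refine mul_le_mul_of_nonneg_left ?_ (abs_nonneg _)
      refine (Finset.abs_sum_le_sum_abs _ _).trans (Finset.sum_le_sum fun k _ => ?_)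
      rw [abs_mul]
      exact mul_le_mul_of_nonneg_left (hC2 j k _) (abs_nonneg _)
    have hkey := hstein (fun s : ℝ => h (s • x))
      ⟨hsm, ⟨C0, fun t => hC0 _⟩, ⟨_, hb1⟩, ⟨_, hb2⟩⟩
    rw [hcent] at hkey
    calc ∫ ω, ε ω * ∑ j, x j * pd j h (ε ω • x) ∂μ
        = ∫ ω, (ε ω - 0) * deriv (fun s : ℝ => h (s • x)) (ε ω) ∂μ := by
          refine integral_congr_ae (ae_of_all _ fun ω => ?_)
          simp only []
          rw [sub_zero, d1]
      _ = ∫ ω, τ (ε ω) * deriv (deriv fun s : ℝ => h (s • x)) (ε ω) ∂μ := hkey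
      _ = _ := by
          refine integral_congr_ae (ae_of_all _ fun ω => ?_)
          simp only []
          rw [d2]
  have hφ₁c : Continuous (phi1 h) := by
    unfold phi1
    exact continuous_fst.mul <| continuous_finset_sum _ fun j _ =>
      ((continuous_apply j).comp continuous_snd).mul
        ((hpdcont j).comp (continuous_fst.smul continuous_snd))
  have hφ₂m : Measurable (phi2 h τ) := by
    unfold phi2
    exact (hτm.comp measurable_fst).mul <|
      Finset.measurable_sum _ fun j _ =>
        ((measurable_pi_apply j).comp measurable_snd).mul <|
          Finset.measurable_sum _ fun k _ =>
            ((measurable_pi_apply k).comp measurable_snd).mul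
              ((hpd2cont j k).measurable.comp (continuous_fst.smul continuous_snd).measurable)
  have hnorm1 : Integrable (fun p : ℝ × (Fin d → ℝ) => ‖(fun j => p.1 * p.2 j)‖)
      ((Measure.map ε μ).prod (Measure.map X μ)) := by
    have h2 := (integrable_map_measure (f := fun ω => (ε ω, X ω))
      (g := fun p : ℝ × (Fin d → ℝ) => ‖(fun j => p.1 * p.2 j)‖)
      ((measurable_pi_lambda _ fun j : Fin d =>
        measurable_fst.mul
          ((measurable_pi_apply j).comp measurable_snd)).norm.aestronglyMeasurable)
      hYm.aemeasurable).mpr hint1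
    exact hνρ ▸ h2
  have hnorm2 : Integrable
      (fun p : ℝ × (Fin d → ℝ) =>
        ‖(fun q : Fin d × Fin d => τ p.1 * (p.2 q.1 * p.2 q.2))‖)
      ((Measure.map ε μ).prod (Measure.map X μ)) := by
    have h2 := (integrable_map_measure (f := fun ω => (ε ω, X ω))
      (g := fun p : ℝ × (Fin d → ℝ) =>
        ‖(fun q : Fin d × Fin d => τ p.1 * (p.2 q.1 * p.2 q.2))‖)
      ((measurable_pi_lambda _ fun q : Fin d × Fin d =>
        (hτm.comp measurable_fst).mul
          (((measurable_pi_apply q.1).comp measurable_snd).mul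
            ((measurable_pi_apply q.2).comp measurable_snd))).norm.aestronglyMeasurable)
      hYm.aemeasurable).mpr hint2
    exact hνρ ▸ h2
  have hIφ₁ : Integrable (phi1 h) ((Measure.map ε μ).prod (Measure.map X μ)) := by
    refine (hnorm1.const_mul (∑ j, C1 j)).mono' hφ₁c.aestronglyMeasurable
      (ae_of_all _ fun p => ?_)
    rw [Real.norm_eq_abs]
    calc |phi1 h p| = |∑ j, (p.1 * p.2 j) * pd j h (p.1 • p.2)| := by
          rw [show phi1 h p = p.1 * ∑ j, p.2 j * pd j h (p.1 • p.2) from rfl, Finset.mul_sum]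
          congr 1
          exact Finset.sum_congr rfl fun j _ => by ring
      _ ≤ ∑ j, |(p.1 * p.2 j) * pd j h (p.1 • p.2)| := Finset.abs_sum_le_sum_abs _ _
      _ ≤ ∑ j, C1 j * ‖(fun i => p.1 * p.2 i)‖ := by
          refine Finset.sum_le_sum fun j _ => ?_
          rw [abs_mul, mul_comm]
          have h1 : |p.1 * p.2 j| ≤ ‖(fun i => p.1 * p.2 i)‖ :=
            norm_le_pi_norm (fun i => p.1 * p.2 i) j
          exact mul_le_mul (hC1 j _) h1 (abs_nonneg _)
            (le_trans (abs_nonneg _) (hC1 j 0))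
      _ = (∑ j, C1 j) * ‖(fun i => p.1 * p.2 i)‖ := by rw [Finset.sum_mul]
  have hIφ₂ : Integrable (phi2 h τ) ((Measure.map ε μ).prod (Measure.map X μ)) := by
    refine (hnorm2.const_mul (∑ j, ∑ k, C2 j k)).mono' hφ₂m.aestronglyMeasurable
      (ae_of_all _ fun p => ?_)
    rw [Real.norm_eq_abs]
    calc |phi2 h τ p|
        = |∑ j, ∑ k, (τ p.1 * (p.2 j * p.2 k)) * pd k (pd j h) (p.1 • p.2)| := by
          rw [show phi2 h τ p
              = τ p.1 * ∑ j, p.2 j * ∑ k, p.2 k * pd k (pd j h) (p.1 • p.2) from rfl,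
            Finset.mul_sum]
          congr 1
          refine Finset.sum_congr rfl fun j _ => ?_
          rw [Finset.mul_sum, Finset.mul_sum]
          exact Finset.sum_congr rfl fun k _ => by ring
      _ ≤ ∑ j, |∑ k, (τ p.1 * (p.2 j * p.2 k)) * pd k (pd j h) (p.1 • p.2)| :=
          Finset.abs_sum_le_sum_abs _ _
      _ ≤ ∑ j, ∑ k, |(τ p.1 * (p.2 j * p.2 k)) * pd k (pd j h) (p.1 • p.2)| :=
          Finset.sum_le_sum fun j _ => Finset.abs_sum_le_sum_abs _ _
      _ ≤ ∑ j, ∑ k, C2 j k * ‖(fun q : Fin d × Fin d => τ p.1 * (p.2 q.1 * p.2 q.2))‖ := by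
          refine Finset.sum_le_sum fun j _ => Finset.sum_le_sum fun k _ => ?_
          rw [abs_mul, mul_comm]
          have h1 : |τ p.1 * (p.2 j * p.2 k)|
              ≤ ‖(fun q : Fin d × Fin d => τ p.1 * (p.2 q.1 * p.2 q.2))‖ :=
            norm_le_pi_norm (fun q : Fin d × Fin d => τ p.1 * (p.2 q.1 * p.2 q.2)) (j, k)
          exact mul_le_mul (hC2 j k _) h1 (abs_nonneg _)
            (le_trans (abs_nonneg _) (hC2 j k 0))
      _ = (∑ j, ∑ k, C2 j k) * ‖(fun q : Fin d × Fin d => τ p.1 * (p.2 q.1 * p.2 q.2))‖ := by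
          rw [Finset.sum_mul]
          exact Finset.sum_congr rfl fun j _ => by rw [Finset.sum_mul]
  have hterm_int : ∀ j k : Fin d,
      Integrable (fun ω => (τ (ε ω) * (X ω j * X ω k))
        * pd k (pd j h) (fun j' => ε ω * X ω j')) μ := by
    intro j k
    refine ((hf_int j k).bdd_mul
      ((((hpd2cont j k).measurable.comp hηm) :
          Measurable fun ω => pd k (pd j h) (fun j' => ε ω * X ω j')).aestronglyMeasurable)
      (c := C2 j k) (ae_of_all _ fun ω => by
        simpa [Real.norm_eq_abs, pdList] using hC2 j k (fun j' => ε ω * X ω j'))).congr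
      (ae_of_all _ fun ω => mul_comm _ _)
  have hterm_int' : ∀ j k : Fin d,
      Integrable (fun ω => tau2 μ X ε τ (fun j' => ε ω * X ω j') j k
        * pd k (pd j h) (fun j' => ε ω * X ω j')) μ := by
    intro j k
    refine ((hτ'int j k).bdd_mul
      ((((hpd2cont j k).measurable.comp hηm) :
          Measurable fun ω => pd k (pd j h) (fun j' => ε ω * X ω j')).aestronglyMeasurable)
      (c := C2 j k) (ae_of_all _ fun ω => by
        simpa [Real.norm_eq_abs, pdList] using hC2 j k (fun j' => ε ω * X ω j'))).congr
      (ae_of_all _ fun ω => mul_comm _ _)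
  have hηm' : Measurable[MeasurableSpace.comap (fun ω (j : Fin d) => ε ω * X ω j)
      inferInstance] (fun ω (j : Fin d) => ε ω * X ω j) := Measurable.of_comap_le le_rfl
  calc ∫ ω, ∑ j, (ε ω * X ω j - ∫ ω', ε ω' * X ω' j ∂μ)
          * pd j h (fun j' => ε ω * X ω j') ∂μ
      = ∫ ω, phi1 h (ε ω, X ω) ∂μ := by
        refine integral_congr_ae (ae_of_all _ fun ω => ?_)
        simp only []
        show ∑ j, (ε ω * X ω j - ∫ ω', ε ω' * X ω' j ∂μ)
            * pd j h (fun j' => ε ω * X ω j')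
          = ε ω * ∑ j, X ω j * pd j h (fun j' => ε ω * X ω j')
        simp only [step0, sub_zero, Finset.mul_sum]
        exact Finset.sum_congr rfl fun j _ => by ring
    _ = ∫ p, phi1 h p ∂((Measure.map ε μ).prod (Measure.map X μ)) := by
        rw [← hνρ]
        exact (integral_map hYm.aemeasurable hφ₁c.aestronglyMeasurable).symm
    _ = ∫ x, ∫ e, phi1 h (e, x) ∂(Measure.map ε μ) ∂(Measure.map X μ) :=
        integral_prod_symm (phi1 h) hIφ₁
    _ = ∫ x, ∫ e, phi2 h τ (e, x) ∂(Measure.map ε μ) ∂(Measure.map X μ) := by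
        refine integral_congr_ae (ae_of_all _ fun x => ?_)
        simp only []
        have ha1 : AEStronglyMeasurable (fun e : ℝ => phi1 h (e, x)) (Measure.map ε μ) :=
          (hφ₁c.comp (continuous_id.prodMk continuous_const)).aestronglyMeasurable
        have ha2 : AEStronglyMeasurable (fun e : ℝ => phi2 h τ (e, x)) (Measure.map ε μ) :=
          (hφ₂m.comp (measurable_id.prodMk measurable_const)).aestronglyMeasurable
        rw [integral_map hεm.aemeasurable ha1, integral_map hεm.aemeasurable ha2]
        exact steinx x
    _ = ∫ p, phi2 h τ p ∂((Measure.map ε μ).prod (Measure.map X μ)) :=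
        (integral_prod_symm (phi2 h τ) hIφ₂).symm
    _ = ∫ ω, phi2 h τ (ε ω, X ω) ∂μ := by
        rw [← hνρ]
        exact integral_map hYm.aemeasurable hφ₂m.aestronglyMeasurable
    _ = ∫ ω, ∑ j, ∑ k, (τ (ε ω) * (X ω j * X ω k))
          * pd k (pd j h) (fun j' => ε ω * X ω j') ∂μ := by
        refine integral_congr_ae (ae_of_all _ fun ω => ?_)
        simp only []
        show τ (ε ω) * ∑ j, X ω j * ∑ k, X ω k
            * pd k (pd j h) (fun j' => ε ω * X ω j') = _
        simp only [Finset.mul_sum]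
        refine Finset.sum_congr rfl fun j _ => Finset.sum_congr rfl fun k _ => by ring
    _ = ∑ j, ∑ k, ∫ ω, (τ (ε ω) * (X ω j * X ω k))
          * pd k (pd j h) (fun j' => ε ω * X ω j') ∂μ := by
        rw [integral_finset_sum _ fun j _ =>
          integrable_finset_sum _ fun k _ => hterm_int j k]
        exact Finset.sum_congr rfl fun j _ => integral_finset_sum _ fun k _ => hterm_int j k
    _ = ∑ j, ∑ k, ∫ ω, tau2 μ X ε τ (fun j' => ε ω * X ω j') j k
          * pd k (pd j h) (fun j' => ε ω * X ω j') ∂μ := by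
        refine Finset.sum_congr rfl fun j _ => Finset.sum_congr rfl fun k _ => ?_
        have hDm' : StronglyMeasurable[MeasurableSpace.comap
            (fun ω (j : Fin d) => ε ω * X ω j) inferInstance]
            fun ω => pd k (pd j h) (fun j' => ε ω * X ω j') :=
          (((hpd2cont j k).measurable.comp hηm') :
            Measurable[MeasurableSpace.comap (fun ω (j : Fin d) => ε ω * X ω j) inferInstance]
              fun ω => pd k (pd j h) (fun j' => ε ω * X ω j')).stronglyMeasurable
        have hmul_int : Integrable
            ((fun ω => pd k (pd j h) (fun j' => ε ω * X ω j'))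
              * fun ω => τ (ε ω) * (X ω j * X ω k)) μ :=
          (hf_int j k).bdd_mul
            ((((hpd2cont j k).measurable.comp hηm) :
              Measurable fun ω => pd k (pd j h) (fun j' => ε ω * X ω j')).aestronglyMeasurable)
            (c := C2 j k) (ae_of_all _ fun ω => by
              simpa [Real.norm_eq_abs, pdList] using hC2 j k (fun j' => ε ω * X ω j'))
        have hpull := condExp_mul_of_stronglyMeasurable_left
          (m := MeasurableSpace.comap (fun ω (j : Fin d) => ε ω * X ω j) inferInstance)
          hDm' hmul_int (hf_int j k)
        calc ∫ ω, (τ (ε ω) * (X ω j * X ω k))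
              * pd k (pd j h) (fun j' => ε ω * X ω j') ∂μ
            = ∫ ω, ((fun ω => pd k (pd j h) (fun j' => ε ω * X ω j'))
                * fun ω => τ (ε ω) * (X ω j * X ω k)) ω ∂μ := by
              refine integral_congr_ae (ae_of_all _ fun ω => ?_)
              simp only []
              simp [mul_comm]
          _ = ∫ ω, (μ[(fun ω => pd k (pd j h) (fun j' => ε ω * X ω j'))
                * fun ω => τ (ε ω) * (X ω j * X ω k)|MeasurableSpace.comap
                  (fun ω (j : Fin d) => ε ω * X ω j) inferInstance]) ω ∂μ :=
              (integral_condExp hm').symm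
          _ = ∫ ω, ((fun ω => pd k (pd j h) (fun j' => ε ω * X ω j'))
                * μ[(fun ω => τ (ε ω) * (X ω j * X ω k))|MeasurableSpace.comap
                  (fun ω (j : Fin d) => ε ω * X ω j) inferInstance]) ω ∂μ :=
              integral_congr_ae hpull
          _ = ∫ ω, tau2 μ X ε τ (fun j' => ε ω * X ω j') j k
                * pd k (pd j h) (fun j' => ε ω * X ω j') ∂μ := by
              refine integral_congr_ae ?_
              filter_upwards [hcond j k] with ω hω
              rw [Pi.mul_apply, hω, mul_comm]
    _ = ∫ ω, ∑ j, ∑ k, tau2 μ X ε τ (fun j' => ε ω * X ω j') j k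
          * pd k (pd j h) (fun j' => ε ω * X ω j') ∂μ := by
        rw [integral_finset_sum _ fun j _ =>
          integrable_finset_sum _ fun k _ => hterm_int' j k]
        exact Finset.sum_congr rfl fun j _ =>
          (integral_finset_sum _ fun k _ => hterm_int' j k).symm
end
end

section
/- Let X be a random variable with a gamma distribution of shape ν ∈ (0,1) and rate α > 0, with density f and distribution function F. Then liminf_{p↑1} f(F^{-1}(p))/(1−p) = α. In particular this liminf is strictly positive. -/
open MeasureTheory ProbabilityTheory Filter
open Set Real Topology

noncomputable section


lemma gamma_integrable {ν α : ℝ} (hν : 0 < ν) (hα : 0 < α) :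
    Integrable (gammaPDFReal ν α) := by
  refine ⟨(measurable_gammaPDFReal ν α).aestronglyMeasurable, ?_⟩
  rw [HasFiniteIntegral]
  have : ∀ x, ‖gammaPDFReal ν α x‖ₑ = gammaPDF ν α x := by
    intro x
    rw [gammaPDF, ← Real.enorm_eq_ofReal (gammaPDFReal_nonneg hν hα x)]
  simp_rw [this, lintegral_gammaPDF_eq_one hν hα]
  exact ENNReal.one_lt_top

lemma gamma_integral_one {ν α : ℝ} (hν : 0 < ν) (hα : 0 < α) :
    ∫ x, gammaPDFReal ν α x = 1 := by
  rw [integral_eq_lintegral_of_nonneg_ae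
    (ae_of_all _ (gammaPDFReal_nonneg hν hα))
    (measurable_gammaPDFReal ν α).aestronglyMeasurable]
  have : ∫⁻ x, ENNReal.ofReal (gammaPDFReal ν α x) = 1 := lintegral_gammaPDF_eq_one hν hα
  rw [this, ENNReal.toReal_one]

lemma gamma_hazard {ν α : ℝ} (hν0 : 0 < ν) (hν1 : ν < 1) (hα : 0 < α) {t : ℝ} (ht : 0 < t) :
    α * ∫ x in Ioi t, gammaPDFReal ν α x ≤ gammaPDFReal ν α t ∧
    gammaPDFReal ν α t ≤ (α + (1 - ν)/t) * ∫ x in Ioi t, gammaPDFReal ν α x := by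
  set C : ℝ := α ^ ν / Gamma ν with hC
  have hCpos : 0 < C := by
    apply div_pos (rpow_pos_of_pos hα ν) (Gamma_pos_of_pos hν0)
  set g : ℝ → ℝ := fun s => s ^ (ν - 1) * exp (-(α * s)) with hg
  have hgnn : ∀ s, 0 < s → 0 ≤ g s := fun s hs => by positivity
  have hfg : ∀ s, 0 ≤ s → gammaPDFReal ν α s = C * g s := by
    intro s hs
    rw [gammaPDFReal, if_pos hs, mul_assoc]
  have hgint : IntegrableOn g (Ioi t) := by
    refine (((gamma_integrable hν0 hα).const_mul C⁻¹).integrableOn).congr_fun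
      (fun s hs => ?_) measurableSet_Ioi
    beta_reduce
    rw [hfg s (le_of_lt (ht.trans hs)), ← mul_assoc, inv_mul_cancel₀ hCpos.ne', one_mul]
  have hderiv : ∀ s ∈ Ici t, HasDerivAt g (((ν - 1)/s - α) * g s) s := by
    intro s hs
    have hs0 : 0 < s := lt_of_lt_of_le ht hs
    have h1 : HasDerivAt (fun x : ℝ => x ^ (ν - 1)) ((ν - 1) * s ^ (ν - 1 - 1)) s :=
      Real.hasDerivAt_rpow_const (Or.inl hs0.ne')
    have h2 : HasDerivAt (fun x : ℝ => exp (-(α * x))) (-α * exp (-(α * s))) s := by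
      have : HasDerivAt (fun x : ℝ => -(α * x)) (-α) s := by
        exact (((hasDerivAt_id s).const_mul α).neg).congr_deriv (by ring)
      have := this.exp
      convert this using 1
      ring
    have := h1.mul h2
    refine this.congr_deriv ?_
    simp only [hg]
    rw [Real.rpow_sub hs0, Real.rpow_one]
    field_simp
    ring
  have htend : Tendsto g atTop (𝓝 0) := by
    have h1 : Tendsto (fun x : ℝ => x ^ (ν - 1)) atTop (𝓝 0) := by
      have := tendsto_rpow_neg_atTop (by linarith : (0:ℝ) < 1 - ν)
      simpa [neg_sub] using this
    have h2 : Tendsto (fun s : ℝ => exp (-(α * s))) atTop (𝓝 0) := by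
      apply Real.tendsto_exp_atBot.comp
      have : Tendsto (fun s : ℝ => α * s) atTop atTop :=
        Tendsto.const_mul_atTop hα tendsto_id
      simpa using tendsto_neg_atBot_iff.mpr this
    simpa using h1.mul h2
  have hg'int : IntegrableOn (fun s => ((ν - 1)/s - α) * g s) (Ioi t) := by
    refine Integrable.mono' (hgint.const_mul (α + (1 - ν)/t)) ?_ ?_
    · apply AEMeasurable.aestronglyMeasurable
      apply AEMeasurable.mul
      · exact (measurable_const.div measurable_id).sub measurable_const |>.aemeasurable
      · exact ((measurable_id'.pow_const (ν - 1)).mul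
          ((measurable_id'.const_mul α).neg.exp)).aemeasurable
    · rw [ae_restrict_iff' measurableSet_Ioi]
      refine ae_of_all _ (fun s hs => ?_)
      have hs0 : 0 < s := ht.trans hs
      have hgs : 0 ≤ g s := hgnn s hs0
      rw [norm_mul, norm_of_nonneg hgs]
      apply mul_le_mul_of_nonneg_right _ hgs
      rw [Real.norm_eq_abs, abs_of_neg (by
        have : (ν - 1)/s < 0 := div_neg_of_neg_of_pos (by linarith) hs0
        linarith)]
      have h2 : (1 - ν)/s ≤ (1 - ν)/t :=
        div_le_div_of_nonneg_left (by linarith) ht (le_of_lt hs)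
      have h3 : (ν - 1)/s = -((1 - ν)/s) := by ring
      linarith
  have hFTC : ∫ s in Ioi t, ((ν - 1)/s - α) * g s = -g t := by
    rw [integral_Ioi_of_hasDerivAt_of_tendsto' hderiv hg'int htend, zero_sub]
  have hint_g : ∫ x in Ioi t, gammaPDFReal ν α x = C * ∫ s in Ioi t, g s := by
    rw [← integral_const_mul C (fun s => g s)]
    exact setIntegral_congr_fun measurableSet_Ioi
      (fun s hs => hfg s (le_of_lt (ht.trans hs)))
  have lower : α * ∫ s in Ioi t, g s ≤ g t := by
    have hmono : ∫ s in Ioi t, α * g s ≤ ∫ s in Ioi t, -(((ν - 1)/s - α) * g s) := by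
      refine setIntegral_mono_on (hgint.const_mul α) hg'int.neg measurableSet_Ioi
        (fun s hs => ?_)
      have hs0 : 0 < s := ht.trans hs
      have hgs : 0 ≤ g s := hgnn s hs0
      have h2 : (ν - 1)/s ≤ 0 := le_of_lt (div_neg_of_neg_of_pos (by linarith) hs0)
      nlinarith
    rwa [integral_const_mul, integral_neg, hFTC, neg_neg] at hmono
  have upper : g t ≤ (α + (1 - ν)/t) * ∫ s in Ioi t, g s := by
    have hmono : ∫ s in Ioi t, -(((ν - 1)/s - α) * g s)
        ≤ ∫ s in Ioi t, (α + (1 - ν)/t) * g s := by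
      refine setIntegral_mono_on hg'int.neg (hgint.const_mul _) measurableSet_Ioi
        (fun s hs => ?_)
      have hs0 : 0 < s := ht.trans hs
      have hgs : 0 ≤ g s := hgnn s hs0
      have h2 : (1 - ν)/s ≤ (1 - ν)/t :=
        div_le_div_of_nonneg_left (by linarith) ht (le_of_lt hs)
      have h3 : (ν - 1)/s = -((1 - ν)/s) := by ring
      nlinarith
    rwa [integral_const_mul, integral_neg, hFTC, neg_neg] at hmono
  constructor
  · rw [hint_g, hfg t ht.le]
    calc α * (C * ∫ s in Ioi t, g s) = C * (α * ∫ s in Ioi t, g s) := by ring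
    _ ≤ C * g t := mul_le_mul_of_nonneg_left lower hCpos.le
  · rw [hint_g, hfg t ht.le]
    calc C * g t ≤ C * ((α + (1 - ν)/t) * ∫ s in Ioi t, g s) :=
          mul_le_mul_of_nonneg_left upper hCpos.le
    _ = (α + (1 - ν)/t) * (C * ∫ s in Ioi t, g s) := by ring

/-- For the gamma distribution with shape `ν ∈ (0,1)` and rate `α`, with density `f` and
distribution function `F`, `liminf_{p↑1} f(F⁻¹(p))/(1−p) = α`; in particular it is
strictly positive. -/
theorem stmt19 (ν α : ℝ) (hν : ν ∈ Set.Ioo (0 : ℝ) 1) (hα : 0 < α)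
    (F : ℝ → ℝ) (hF : ∀ t, F t = (gammaMeasure ν α (Set.Iic t)).toReal) :
    liminf (fun p => gammaPDFReal ν α (sInf {t | p ≤ F t}) / (1 - p))
        (nhdsWithin 1 (Set.Iio 1)) = α ∧
    0 < liminf (fun p => gammaPDFReal ν α (sInf {t | p ≤ F t}) / (1 - p))
        (nhdsWithin 1 (Set.Iio 1)) := by
  obtain ⟨hν0, hν1⟩ := hν
  haveI : IsProbabilityMeasure (gammaMeasure ν α) := isProbabilityMeasure_gammaMeasure hν0 hα
  have hint : Integrable (gammaPDFReal ν α) := gamma_integrable hν0 hα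
  have hnn : ∀ x, 0 ≤ gammaPDFReal ν α x := gammaPDFReal_nonneg hν0 hα
  have hFc : F = fun t => ProbabilityTheory.cdf (gammaMeasure ν α) t := by
    funext t; rw [hF t, ProbabilityTheory.cdf_eq_real, measureReal_def]
  have hFi : ∀ t, F t = ∫ x in Iic t, gammaPDFReal ν α x := by
    intro t
    rw [hFc]
    exact cdf_gammaMeasure_eq_integral hν0 hα t
  have hFnn : ∀ t, 0 ≤ F t := fun t => (hF t) ▸ ENNReal.toReal_nonneg
  have hmonoF : Monotone F := by
    rw [hFc]; exact (ProbabilityTheory.cdf (gammaMeasure ν α)).mono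
  have hFtop : Tendsto F atTop (𝓝 1) := by
    rw [hFc]; exact ProbabilityTheory.tendsto_cdf_atTop (gammaMeasure ν α)
  have hcont : Continuous F := by
    have hc := hint.continuous_primitive 0
    have heq : F = fun t => (∫ x in (0:ℝ)..t, gammaPDFReal ν α x) + F 0 := by
      funext t
      have h := intervalIntegral.integral_Iic_sub_Iic (a := (0:ℝ)) (b := t)
        hint.integrableOn hint.integrableOn
      rw [hFi t, hFi 0]
      linarith
    rw [heq]
    exact hc.add continuous_const
  have hfz : ∀ x ≤ (0:ℝ), gammaPDFReal ν α x = 0 := by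
    intro x hx
    rcases lt_or_eq_of_le hx with h | h
    · rw [gammaPDFReal, if_neg (not_le.mpr h)]
    · subst h
      rw [gammaPDFReal, if_pos le_rfl,
        Real.zero_rpow (sub_ne_zero_of_ne (ne_of_lt hν1)), mul_zero, zero_mul]
  have hF0 : ∀ t ≤ (0:ℝ), F t = 0 := by
    intro t ht
    rw [hFi t, setIntegral_congr_fun measurableSet_Iic
      (fun x (hx : x ∈ Iic t) => hfz x (le_trans hx ht))]
    exact integral_zero _ _
  have htail : ∀ t, F t + ∫ x in Ioi t, gammaPDFReal ν α x = 1 := by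
    intro t
    rw [hFi t, intervalIntegral.integral_Iic_add_Ioi hint.integrableOn hint.integrableOn,
      gamma_integral_one hν0 hα]
  have htailpos : ∀ t, 0 < ∫ x in Ioi t, gammaPDFReal ν α x := by
    intro t
    rw [setIntegral_pos_iff_support_of_nonneg_ae (ae_of_all _ hnn) hint.integrableOn]
    refine lt_of_lt_of_le ?_ (measure_mono (?_ : Ioi (max t 0) ⊆ _))
    · rw [Real.volume_Ioi]
      exact ENNReal.zero_lt_top
    · intro x hx
      rw [mem_Ioi, max_lt_iff] at hx
      exact ⟨ne_of_gt (gammaPDFReal_pos hν0 hα hx.2), hx.1⟩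
  have hFlt1 : ∀ t, F t < 1 := fun t => by
    have h1 := htail t; have h2 := htailpos t; linarith
  have hQ : ∀ p ∈ Ioo (0:ℝ) 1,
      0 < sInf {t | p ≤ F t} ∧ F (sInf {t | p ≤ F t}) = p := by
    intro p hp
    set S := {t | p ≤ F t} with hSdef
    have hSsub : S ⊆ Ioi 0 := by
      intro t ht
      by_contra h
      rw [mem_Ioi, not_lt] at h
      have := hF0 t h
      have : p ≤ F t := ht
      linarith [hp.1]
    have hSne : S.Nonempty := by
      have : ∀ᶠ t in atTop, p ≤ F t := hFtop.eventually (eventually_ge_nhds hp.2)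
      exact this.exists
    have hSbdd : BddBelow S := ⟨0, fun t ht => (hSsub ht).le⟩
    have hclosed : IsClosed S := IsClosed.preimage hcont isClosed_Ici
    have hQmem : sInf S ∈ S := hclosed.csInf_mem hSne hSbdd
    refine ⟨hSsub hQmem, le_antisymm ?_ hQmem⟩
    by_contra h
    push_neg at h
    have hev : ∀ᶠ t in 𝓝 (sInf S), p < F t :=
      (hcont.tendsto (sInf S)).eventually (eventually_gt_nhds h)
    have hev' : ∀ᶠ t in 𝓝[<] (sInf S), p < F t := hev.filter_mono nhdsWithin_le_nhds
    have hev2 : ∀ᶠ t in 𝓝[<] (sInf S), t ∈ Iio (sInf S) := self_mem_nhdsWithin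
    obtain ⟨t, h1, h2⟩ := (hev'.and hev2).exists
    have : sInf S ≤ t := csInf_le hSbdd h1.le
    exact absurd this (not_le.mpr h2)
  have hQtop : Tendsto (fun p => sInf {t | p ≤ F t}) (𝓝[<] (1:ℝ)) atTop := by
    rw [tendsto_atTop]
    intro M
    have hM' : F (max M 1) < 1 := hFlt1 (max M 1)
    have hmem : Ioo (F (max M 1)) 1 ∈ 𝓝[<] (1:ℝ) :=
      Ioo_mem_nhdsLT hM'
    filter_upwards [hmem] with p hp
    have hp01 : p ∈ Ioo (0:ℝ) 1 :=
      ⟨lt_of_le_of_lt (hFnn _) hp.1, hp.2⟩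
    have hSne : {t | p ≤ F t}.Nonempty := by
      have : ∀ᶠ t in atTop, p ≤ F t := hFtop.eventually (eventually_ge_nhds hp.2)
      exact this.exists
    refine le_trans (le_max_left M 1) (le_csInf hSne ?_)
    intro t ht
    by_contra hcon
    push_neg at hcon
    have h1 : F t ≤ F (max M 1) := hmonoF hcon.le
    have h2 : p ≤ F t := ht
    linarith [hp.1]
  have hev : ∀ᶠ p in 𝓝[<] (1:ℝ), p ∈ Ioo (0:ℝ) 1 :=
    Ioo_mem_nhdsLT zero_lt_one
  have hbound : ∀ᶠ p in 𝓝[<] (1:ℝ),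
      α ≤ gammaPDFReal ν α (sInf {t | p ≤ F t}) / (1 - p) ∧
      gammaPDFReal ν α (sInf {t | p ≤ F t}) / (1 - p)
        ≤ α + (1 - ν) / (sInf {t | p ≤ F t}) := by
    filter_upwards [hev] with p hp
    obtain ⟨hQpos, hFQ⟩ := hQ p hp
    have h1p : 0 < 1 - p := by linarith [hp.2]
    have htail' : 1 - p = ∫ x in Ioi (sInf {t | p ≤ F t}), gammaPDFReal ν α x := by
      have := htail (sInf {t | p ≤ F t})
      rw [hFQ] at this
      linarith
    have hz := gamma_hazard hν0 hν1 hα hQpos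
    constructor
    · rw [le_div_iff₀ h1p, htail']
      exact hz.1
    · rw [div_le_iff₀ h1p, htail']
      exact hz.2
  have hub : Tendsto (fun p => α + (1 - ν) / (sInf {t | p ≤ F t}))
      (𝓝[<] (1:ℝ)) (𝓝 α) := by
    have : Tendsto (fun p => (1 - ν) / (sInf {t | p ≤ F t})) (𝓝[<] (1:ℝ)) (𝓝 0) :=
      Tendsto.div_atTop tendsto_const_nhds hQtop
    simpa using tendsto_const_nhds.add this
  have hlim : Tendsto (fun p => gammaPDFReal ν α (sInf {t | p ≤ F t}) / (1 - p))
      (𝓝[<] (1:ℝ)) (𝓝 α) :=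
    tendsto_of_tendsto_of_tendsto_of_le_of_le' tendsto_const_nhds hub
      (hbound.mono fun p hp => hp.1) (hbound.mono fun p hp => hp.2)
  have heq := hlim.liminf_eq
  refine ⟨heq, ?_⟩
  rw [heq]
  exact hα
end
end
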